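/- For a finite sequential procedure P and k ∈ ℕ, define π_k(P) recursively by π_k(const c) = const c if c ≤ k else const ⊥, and π_k(query i Q B) = query i (π_k Q) (a ↦ if a ≤ k then π_k(B a) else const ⊥). Then for all tuples f⃗ of monotone functions ℕ⊥ → ℕ⊥ whose components map into {⊥,0,…,k} and are ⊥ outside {⊥,0,…,k}-truncated inputs, ⟦π_k(P)⟧(f⃗) = π_k(⟦P⟧(f⃗)). -/
import Mathlib


/-- Flat order on ℕ⊥. -/
def fle (x y : WithBot ℕ) : Prop := x = ⊥ ∨ x = y

/-- Monotone w.r.t. the flat order. -/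
def Mono (f : WithBot ℕ → WithBot ℕ) : Prop := ∀ x y, fle x y → fle (f x) (f y)

/-- Pointwise flat order on functions. -/
def ple (f g : WithBot ℕ → WithBot ℕ) : Prop := ∀ x, fle (f x) (g x)

/-- Truncation π_k. -/
def pik (k : ℕ) (x : WithBot ℕ) : WithBot ℕ :=
  WithBot.recBotCoe ⊥ (fun m => if m ≤ k then (m : WithBot ℕ) else ⊥) x

/-- Π_k(f) = π_k ∘ f ∘ π_k. -/
def Pif (k : ℕ) (f : WithBot ℕ → WithBot ℕ) : WithBot ℕ → WithBot ℕ :=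
  fun x => pik k (f (pik k x))

/-- Strictification. -/
def strictify (f : WithBot ℕ → WithBot ℕ) : WithBot ℕ → WithBot ℕ :=
  fun x => WithBot.recBotCoe ⊥ (fun m => f (m : WithBot ℕ)) x

inductive Proc (n : ℕ) : Type where
  | const : WithBot ℕ → Proc n
  | query : Fin n → Proc n → (ℕ → Proc n) → Proc n

inductive FiniteProc {n : ℕ} : Proc n → Prop where
  | const (c) : FiniteProc (Proc.const c)
  | query (i Q B) : FiniteProc Q → (∀ a, FiniteProc (B a)) →
      {a | B a ≠ Proc.const ⊥}.Finite → FiniteProc (Proc.query i Q B)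

def denot {n : ℕ} : Proc n → (Fin n → WithBot ℕ → WithBot ℕ) → WithBot ℕ
  | .const c, _ => c
  | .query i Q B, f =>
      WithBot.recBotCoe ⊥ (fun a => denot (B a) f) (f i (denot Q f))

/-- Componentwise-pointwise order on tuples. -/
def tle {n : ℕ} (f g : Fin n → WithBot ℕ → WithBot ℕ) : Prop := ∀ i, ple (f i) (g i)

/-- Monotone functional. -/
def MonoF {n : ℕ} (F : (Fin n → WithBot ℕ → WithBot ℕ) → WithBot ℕ) : Prop :=
  ∀ f g, tle f g → fle (F f) (F g)

/-- Π⃗_k componentwise. -/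
def Pivec {n : ℕ} (k : ℕ) (f : Fin n → WithBot ℕ → WithBot ℕ) :
    Fin n → WithBot ℕ → WithBot ℕ := fun i => Pif k (f i)

open Classical in
/-- Strictify coordinates in S. -/
noncomputable def strictifyS {n : ℕ} (S : Set (Fin n))
    (f : Fin n → WithBot ℕ → WithBot ℕ) : Fin n → WithBot ℕ → WithBot ℕ :=
  fun i => if i ∈ S then strictify (f i) else f i

/-- F_S = F ∘ strictify_S. -/
noncomputable def FS {n : ℕ} (F : (Fin n → WithBot ℕ → WithBot ℕ) → WithBot ℕ)
    (S : Set (Fin n)) : (Fin n → WithBot ℕ → WithBot ℕ) → WithBot ℕ :=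
  fun f => F (strictifyS S f)

def pproj {n : ℕ} (k : ℕ) : Proc n → Proc n
  | .const c => .const (pik k c)
  | .query i Q B =>
      .query i (pproj k Q) (fun a => if a ≤ k then pproj k (B a) else .const ⊥)

/-- for level-k tuples, the denotation of π_k(P) equals the
k-truncation of the denotation of P. -/
lemma recBotCoe_natCast (d : WithBot ℕ) (g : ℕ → WithBot ℕ) (m : ℕ) :
    WithBot.recBotCoe d g (m : WithBot ℕ) = g m := rfl

theorem stmt10 (n k : ℕ) (P : Proc n) (hP : FiniteProc P)
    (f : Fin n → WithBot ℕ → WithBot ℕ) (hf : ∀ i, Mono (f i))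
    (hlev : ∀ i, f i = Pif k (f i)) :
    denot (pproj k P) f = pik k (denot P f) := by
  clear hP
  have hidem : ∀ x, pik k (pik k x) = pik k x := by
    intro x
    cases x with
    | bot => rfl
    | coe m =>
      by_cases h : m ≤ k <;>
        simp [h, pik, WithBot.recBotCoe_coe, recBotCoe_natCast]
  induction P with
  | const c => rfl
  | query i Q B ihQ ihB =>
    simp only [pproj, denot]
    rw [ihQ]
    have hfi : f i (pik k (denot Q f)) = f i (denot Q f) := by
      conv_lhs => rw [hlev i]
      conv_rhs => rw [hlev i]
      simp [Pif, hidem]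
    rw [hfi]
    have hy : f i (denot Q f) = pik k (f i (pik k (denot Q f))) := by
      conv_lhs => rw [hlev i]
      rfl
    cases hz : f i (pik k (denot Q f)) with
    | bot =>
      rw [hz] at hfi
      rw [← hfi]
      rfl
    | coe a =>
      rw [hz] at hy hfi
      by_cases ha : a ≤ k
      · simp only [pik, WithBot.recBotCoe_coe, if_pos ha] at hy
        rw [← hfi]
        simp only [WithBot.recBotCoe_coe, if_pos ha]
        exact ihB a
      · simp only [pik, WithBot.recBotCoe_coe, if_neg ha] at hy
        exact absurd (hfi.trans hy) (by simp)
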